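/- Bridge transmission (single signal propagation along a Z-path): let Z ∈ {H,V}^k and let P be a Z-path with parameters (x, α, β). Let c be a configuration with c(P(0)) = 4, c(P(s)) = 3 for 1 ≤ s ≤ k, and c(y) ≤ 3 for every cell y not on P. Then for every 0 ≤ i ≤ k, the configuration obtained after applying updates Z(1),...,Z(i) satisfies: the cell P(i) has state 4, and every cell P(j) with j > i has state 3. -/

import Mathlib

inductive Letter | H | V
deriving DecidableEq, BEq

/-- Horizontal neighborhood `N_h(x) = {x, x+(1,0), x-(1,0)}`. -/
def Nh (x : ℤ × ℤ) : Finset (ℤ × ℤ) := {x, x + (1, 0), x - (1, 0)}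

/-- Vertical neighborhood `N_v(x) = {x, x+(0,1), x-(0,1)}`. -/
def Nv (x : ℤ × ℤ) : Finset (ℤ × ℤ) := {x, x + (0, 1), x - (0, 1)}

/-- The horizontal update of the fungal automaton. -/
def upH (c : ℤ × ℤ → ℤ) (x : ℤ × ℤ) : ℤ :=
  c x - 2 * (if 4 ≤ c x then 1 else 0) + ∑ y ∈ Nh x, (if 4 ≤ c y then 1 else 0)

/-- The vertical update of the fungal automaton. -/
def upV (c : ℤ × ℤ → ℤ) (x : ℤ × ℤ) : ℤ :=
  c x - 2 * (if 4 ≤ c x then 1 else 0) + ∑ y ∈ Nv x, (if 4 ≤ c y then 1 else 0)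

def Letter.step (L : Letter) (α β : ℤ) : ℤ × ℤ :=
  match L with
  | .H => (α, 0)
  | .V => (0, β)

def zpath (Z : ℕ → Letter) (x : ℤ × ℤ) (α β : ℤ) : ℕ → ℤ × ℤ
  | 0 => x
  | s + 1 => zpath Z x α β s + (Z (s + 1)).step α β

def applyL (c : ℤ × ℤ → ℤ) (L : Letter) : ℤ × ℤ → ℤ :=
  match L with
  | .H => upH c
  | .V => upV c

/-- The configuration after applying the updates `Z(1), …, Z(i)` in order. -/
def runZ (Z : ℕ → Letter) (c : ℤ × ℤ → ℤ) : ℕ → ℤ × ℤ → ℤ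
  | 0 => c
  | i + 1 => applyL (runZ Z c i) (Z (i + 1))

lemma Nh_sum (x : ℤ × ℤ) (f : ℤ × ℤ → ℤ) :
    ∑ y ∈ Nh x, f y = f x + f (x + (1, 0)) + f (x - (1, 0)) := by
  have h1 : x ≠ x + (1, 0) := by
    intro h
    have := congrArg Prod.fst h
    simp at this
  have h2 : x ≠ x - (1, 0) := by
    intro h
    have := congrArg Prod.fst h
    simp at this
    omega
  have h3 : x + (1, 0) ≠ x - (1, 0) := by
    intro h
    have := congrArg Prod.fst h
    simp at this
    omega
  rw [Nh, Finset.sum_insert (by simp [h1, h2]), Finset.sum_insert (by simp [h3]),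
    Finset.sum_singleton]
  ring

lemma Nv_sum (x : ℤ × ℤ) (f : ℤ × ℤ → ℤ) :
    ∑ y ∈ Nv x, f y = f x + f (x + (0, 1)) + f (x - (0, 1)) := by
  have h1 : x ≠ x + (0, 1) := by
    intro h
    have := congrArg Prod.snd h
    simp at this
  have h2 : x ≠ x - (0, 1) := by
    intro h
    have := congrArg Prod.snd h
    simp at this
    omega
  have h3 : x + (0, 1) ≠ x - (0, 1) := by
    intro h
    have := congrArg Prod.snd h
    simp at this
    omega
  rw [Nv, Finset.sum_insert (by simp [h1, h2]), Finset.sum_insert (by simp [h3]),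
    Finset.sum_singleton]
  ring

lemma applyL_eval (c : ℤ × ℤ → ℤ) (L : Letter) (α β : ℤ)
    (hα : α = 1 ∨ α = -1) (hβ : β = 1 ∨ β = -1) (y : ℤ × ℤ) :
    applyL c L y = c y - 2 * (if 4 ≤ c y then 1 else 0) +
      ((if 4 ≤ c y then 1 else 0) + (if 4 ≤ c (y + L.step α β) then 1 else 0) +
        (if 4 ≤ c (y - L.step α β) then 1 else 0)) := by
  cases L with
  | H =>
      rcases hα with h | h <;> subst h
      · simp only [applyL, upH, Nh_sum, Letter.step]; rfl
      · have e1 : y + ((-1 : ℤ), (0 : ℤ)) = y - (1, 0) := by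
          apply Prod.ext <;> simp <;> ring
        have e2 : y - ((-1 : ℤ), (0 : ℤ)) = y + (1, 0) := by
          apply Prod.ext <;> simp <;> ring
        simp only [applyL, upH, Nh_sum, Letter.step, e1, e2]
        ring
  | V =>
      rcases hβ with h | h <;> subst h
      · simp only [applyL, upV, Nv_sum, Letter.step]; rfl
      · have e1 : y + ((0 : ℤ), (-1 : ℤ)) = y - (0, 1) := by
          apply Prod.ext <;> simp <;> ring
        have e2 : y - ((0 : ℤ), (-1 : ℤ)) = y + (0, 1) := by
          apply Prod.ext <;> simp <;> ring
        simp only [applyL, upV, Nv_sum, Letter.step, e1, e2]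
        ring

/-- Bridge transmission: a single signal propagates along a Z-path. -/
theorem stmt10 (k : ℕ) (Z : ℕ → Letter) (x : ℤ × ℤ) (α β : ℤ)
    (hα : α = 1 ∨ α = -1) (hβ : β = 1 ∨ β = -1)
    (P : ℕ → ℤ × ℤ) (hP : P = zpath Z x α β)
    (c : ℤ × ℤ → ℤ) (hrange : ∀ y, 0 ≤ c y ∧ c y ≤ 5)
    (hstart : c (P 0) = 4)
    (hpath : ∀ s, 1 ≤ s → s ≤ k → c (P s) = 3)
    (hout : ∀ y : ℤ × ℤ, (∀ s ≤ k, y ≠ P s) → c y ≤ 3) :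
    ∀ i ≤ k, runZ Z c i (P i) = 4 ∧ ∀ j, i < j → j ≤ k → runZ Z c i (P j) = 3 := by
  -- potential function
  set φ : ℤ × ℤ → ℤ := fun y => α * (y.1 - x.1) + β * (y.2 - x.2) with hφ
  have hαα : α * α = 1 := by rcases hα with h | h <;> subst h <;> ring
  have hββ : β * β = 1 := by rcases hβ with h | h <;> subst h <;> ring
  have hφadd : ∀ (L : Letter) (y : ℤ × ℤ), φ (y + L.step α β) = φ y + 1 := by
    intro L y
    rcases hα with h | h <;> rcases hβ with h' | h' <;> subst h <;> subst h' <;>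
      cases L <;> simp [Letter.step, hφ] <;> ring
  have hφsub : ∀ (L : Letter) (y : ℤ × ℤ), φ (y - L.step α β) = φ y - 1 := by
    intro L y
    have := hφadd L (y - L.step α β)
    simp at this
    linarith
  have hφP : ∀ s : ℕ, φ (P s) = s := by
    intro s
    induction s with
    | zero => simp [hP, zpath, hφ]
    | succ s ih =>
        have : P (s + 1) = P s + (Z (s + 1)).step α β := by rw [hP]; rfl
        rw [this, hφadd, ih]
        push_cast
        ring
  have hneP : ∀ (y : ℤ × ℤ) (s : ℕ), φ y ≠ s → y ≠ P s := by
    intro y s h hy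
    exact h (hy ▸ hφP s)
  have if0 : ∀ v : ℤ, v ≤ 3 → (if 4 ≤ v then (1 : ℤ) else 0) = 0 := by
    intro v hv; rw [if_neg (by omega)]
  have main : ∀ i, i ≤ k → runZ Z c i (P i) = 4 ∧
      (∀ j, i < j → j ≤ k → runZ Z c i (P j) = 3) ∧
      (∀ y, y ≠ P i → (i : ℤ) - 1 ≤ φ y → runZ Z c i y ≤ 3) := by
    intro i
    induction i with
    | zero =>
        intro _
        refine ⟨hstart, fun j hj hjk => hpath j hj hjk, ?_⟩
        intro y hy _
        by_cases h : ∀ s ≤ k, y ≠ P s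
        · exact hout y h
        · push_neg at h
          obtain ⟨s, hsk, hys⟩ := h
          rcases Nat.eq_zero_or_pos s with hs | hs
          · exact absurd (hs ▸ hys) hy
          · subst hys
            show c (P s) ≤ 3
            rw [hpath s hs hsk]
    | succ i ih =>
        intro hik
        obtain ⟨h1, h2, h3⟩ := ih (Nat.le_of_succ_le hik)
        set d := (Z (i + 1)).step α β with hd
        have heval : ∀ y, runZ Z c (i + 1) y =
            runZ Z c i y - 2 * (if 4 ≤ runZ Z c i y then 1 else 0) +
            ((if 4 ≤ runZ Z c i y then 1 else 0) +
             (if 4 ≤ runZ Z c i (y + d) then 1 else 0) +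
             (if 4 ≤ runZ Z c i (y - d) then 1 else 0)) := by
          intro y
          exact applyL_eval (runZ Z c i) (Z (i + 1)) α β hα hβ y
        have hPsucc : P (i + 1) = P i + d := by rw [hP]; rfl
        have hPsub : P (i + 1) - d = P i := by rw [hPsucc]; abel
        have hda : ∀ y, φ (y + d) = φ y + 1 := fun y => hφadd (Z (i + 1)) y
        have hds : ∀ y, φ (y - d) = φ y - 1 := fun y => hφsub (Z (i + 1)) y
        -- part 1
        have g1 : runZ Z c (i + 1) (P (i + 1)) = 4 := by
          rw [heval]
          have ha : runZ Z c i (P (i + 1)) = 3 := h2 (i + 1) (Nat.lt_succ_self i) hik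
          have hb : runZ Z c i (P (i + 1) + d) ≤ 3 := by
            apply h3
            · apply hneP
              rw [hda, hφP]
              push_cast; omega
            · rw [hda, hφP]; push_cast; omega
          have hc : runZ Z c i (P (i + 1) - d) = 4 := by rw [hPsub]; exact h1
          rw [ha, hc, if0 _ hb]
          norm_num
        refine ⟨g1, ?_, ?_⟩
        -- part 2
        · intro j hj hjk
          rw [heval]
          have ha : runZ Z c i (P j) = 3 := h2 j (by omega) hjk
          have hb : runZ Z c i (P j + d) ≤ 3 := by
            apply h3
            · apply hneP; rw [hda, hφP]; push_cast; omega
            · rw [hda, hφP]; push_cast; omega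
          have hc : runZ Z c i (P j - d) ≤ 3 := by
            apply h3
            · apply hneP; rw [hds, hφP]; push_cast; omega
            · rw [hds, hφP]; push_cast; omega
          rw [ha, if0 _ hb, if0 _ hc]
          norm_num
        -- part 3
        · intro y hy hphi
          rw [heval]
          by_cases hyP : y = P i
          · subst hyP
            have ha : runZ Z c i (P i) = 4 := h1
            have hb : runZ Z c i (P i + d) = 3 := by
              rw [← hPsucc]; exact h2 (i + 1) (Nat.lt_succ_self i) hik
            have hc : runZ Z c i (P i - d) ≤ 3 := by
              apply h3
              · apply hneP; rw [hds, hφP]; push_cast; omega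
              · rw [hds, hφP]
            rw [ha, hb, if0 _ hc]
            norm_num
          · have ha : runZ Z c i y ≤ 3 := by
              apply h3 y hyP
              push_cast at hphi ⊢; omega
            have hb : runZ Z c i (y + d) ≤ 3 := by
              apply h3
              · apply hneP; rw [hda]; push_cast at hphi ⊢; omega
              · rw [hda]; push_cast at hphi ⊢; omega
            have hc : runZ Z c i (y - d) ≤ 3 := by
              apply h3
              · intro h
                apply hy
                rw [hPsucc, ← h]
                abel
              · rw [hds]; push_cast at hphi ⊢; omega
            rw [if0 _ ha, if0 _ hb, if0 _ hc]
            omega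
  intro i hi
  obtain ⟨a, b, _⟩ := main i hi
  exact ⟨a, b⟩
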